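/- Let C be a category with finite limits satisfying Preregular (so the regular topology on C is defined, generated by single effective epimorphisms), and let ŷ : C ⥤ Sheaf (regularTopology C) (Type) be the sheafified Yoneda embedding. Let E and F be Grothendieck topoi, f^* ⊣ f_* an adjunction with f^* : F ⥤ E preserving finite limits and f_* : E ⥤ F preserving epimorphisms (a matte geometric morphism), and let x^* : Sheaf (regularTopology C) (Type) ⥤ E preserve finite limits and small colimits. Then the composite f_* ∘ x^* ∘ ŷ : C ⥤ F sends every effective epimorphism of C to an epimorphism of F. (Regular topoi are formally regular: this is the continuity step showing they are weakly right Kan injective with respect to matte geometric morphisms, with the presheaf topos as presentation.) -/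
import Mathlib

universe u

open CategoryTheory Limits

/-- Regular topoi are formally regular (continuity step): if `f^* ⊣ f_*` is a matte
geometric morphism (`f_*` preserves epimorphisms) and `x^*` is a point of the regular
topos `Sh(C, regularTopology C)` in `E`, then the composite `f_* ∘ x^* ∘ ŷ : C ⥤ F`
sends every effective epimorphism of `C` to an epimorphism of `F`. -/
theorem statement12 {C : Type u} [SmallCategory C] [HasFiniteLimits C] [Preregular C]
    {D₁ D₂ : Type u} [SmallCategory D₁] [SmallCategory D₂]
    (J : GrothendieckTopology D₁) (K : GrothendieckTopology D₂)
    (fstar : Sheaf K (Type u) ⥤ Sheaf J (Type u))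
    (fsub : Sheaf J (Type u) ⥤ Sheaf K (Type u))
    (adj : fstar ⊣ fsub) [PreservesFiniteLimits fstar] [fsub.PreservesEpimorphisms]
    (xstar : Sheaf (regularTopology C) (Type u) ⥤ Sheaf J (Type u))
    [PreservesFiniteLimits xstar] [PreservesColimitsOfSize.{u, u} xstar]
    {A B : C} (q : A ⟶ B) (hq : EffectiveEpi q) :
    Epi (((yoneda ⋙ presheafToSheaf (regularTopology C) (Type u)) ⋙
      xstar ⋙ fsub).map q) := by
  have hls : Presheaf.IsLocallySurjective (regularTopology C) (yoneda.map q) := by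
    rw [regularTopology.isLocallySurjective_iff]
    intro X y
    obtain ⟨W, h, hh, i, fac⟩ := Preregular.exists_fac y q
    exact ⟨W, h, hh, i, fac⟩
  have h1 : Epi ((presheafToSheaf (regularTopology C) (Type u)).map (yoneda.map q)) := by
    have : Sheaf.IsLocallySurjective
        ((presheafToSheaf (regularTopology C) (Type u)).map (yoneda.map q)) := by
      rwa [Presheaf.isLocallySurjective_presheafToSheaf_map_iff]
    exact Sheaf.epi_of_isLocallySurjective _
  haveI : PreservesColimitsOfShape WalkingSpan xstar :=
    preservesColimitsOfShape_of_equiv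
      (ULiftHomULiftCategory.equiv.{u, u} WalkingSpan).symm xstar
  haveI : xstar.PreservesEpimorphisms := inferInstance
  haveI h1' : Epi ((yoneda ⋙ presheafToSheaf (regularTopology C) (Type u)).map q) := h1
  have h2 : Epi (xstar.map ((yoneda ⋙ presheafToSheaf (regularTopology C) (Type u)).map q)) :=
    xstar.map_epi _
  exact fsub.map_epi _
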